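/- Let A, A* be a Leonard pair on V, let W be an invertible element of ⟨A⟩, and let W* be an invertible element of ⟨A*⟩. Then the following four conditions are equivalent: (1) W A* W^{-1} = (W*)^{-1} A W*; (2) W^{-1} A* W = W* A (W*)^{-1}; (3) W* W A* = A W* W; (4) A* W W* = W W* A. -/

import Mathlib

noncomputable section

open Finset
open Matrix

variable {F V : Type*} [Field F] [AddCommGroup V] [Module F V]

/-- A matrix is irreducible tridiagonal: each nonzero entry lies on the diagonal,
subdiagonal or superdiagonal, and every subdiagonal and superdiagonal entry is nonzero. -/
def IsIrredTridiag {n : ℕ} {F : Type*} [Field F] (M : Matrix (Fin n) (Fin n) F) : Prop :=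
  (∀ i j : Fin n, ((i : ℕ) + 1 < (j : ℕ) ∨ (j : ℕ) + 1 < (i : ℕ)) → M i j = 0) ∧
  (∀ i j : Fin n, ((i : ℕ) + 1 = (j : ℕ) ∨ (j : ℕ) + 1 = (i : ℕ)) → M i j ≠ 0)

/-- A Leonard pair on `V` (of dimension `d+1`): there is a basis in which `A` is
irreducible tridiagonal and `A*` diagonal, and a basis in which `A*` is irreducible
tridiagonal and `A` diagonal. -/
def IsLeonardPair (d : ℕ) (A Astar : Module.End F V) : Prop :=
  (∃ b : Module.Basis (Fin (d + 1)) F V,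
    IsIrredTridiag (LinearMap.toMatrix b b A) ∧ (LinearMap.toMatrix b b Astar).IsDiag) ∧
  (∃ b : Module.Basis (Fin (d + 1)) F V,
    IsIrredTridiag (LinearMap.toMatrix b b Astar) ∧ (LinearMap.toMatrix b b A).IsDiag)

/-- A Boltzmann pair for the Leonard pair `A, A*` : invertible `W ∈ ⟨A⟩`,
`W* ∈ ⟨A*⟩` with `W A* W⁻¹ = (W*)⁻¹ A W*`. -/
def IsBoltzmannPair (A Astar W Wstar : Module.End F V) : Prop :=
  W ∈ Algebra.adjoin F {A} ∧ Wstar ∈ Algebra.adjoin F {Astar} ∧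
  IsUnit W ∧ IsUnit Wstar ∧
  W * Astar * Ring.inverse W = Ring.inverse Wstar * A * Wstar

/-- `E` is an ordering of the primitive idempotents of the multiplicity-free map `B`. -/
def IsIdemOrdering (d : ℕ) (B : Module.End F V) (E : Fin (d + 1) → Module.End F V) : Prop :=
  (∀ i, E i ≠ 0) ∧ (∀ i j, E i * E j = if i = j then E i else 0) ∧
  (∑ i, E i = 1) ∧ ∃ θ : Fin (d + 1) → F, Function.Injective θ ∧ B = ∑ i, θ i • E i

/-- `E` is a standard ordering of the primitive idempotents of `B` (relative to `C`):
choosing nonzero `vᵢ ∈ Eᵢ V`, the matrix of `C` in the basis `vᵢ` is irreducible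
tridiagonal (and the matrix of `B` is diagonal). -/
def IsStandardOrdering (d : ℕ) (B C : Module.End F V)
    (E : Fin (d + 1) → Module.End F V) : Prop :=
  IsIdemOrdering d B E ∧
  ∃ b : Module.Basis (Fin (d + 1)) F V, (∀ i, E i (b i) = b i) ∧
    IsIrredTridiag (LinearMap.toMatrix b b C) ∧ (LinearMap.toMatrix b b B).IsDiag

/-- A Leonard system on `V`. -/
def IsLeonardSystem (d : ℕ) (A Astar : Module.End F V)
    (E Estar : Fin (d + 1) → Module.End F V) : Prop :=
  IsLeonardPair d A Astar ∧ IsStandardOrdering d A Astar E ∧ IsStandardOrdering d Astar A Estar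

-- auxiliary lemmas

private lemma unit_conj_iff₁ {M : Type*} [Monoid M] (w ws : Mˣ) (a b : M) :
    (w : M) * a * ↑w⁻¹ = ↑ws⁻¹ * b * ↑ws ↔ (ws : M) * ↑w * a = b * ((ws : M) * ↑w) := by
  constructor
  · intro h
    have h2 := congrArg (fun x => (ws : M) * x * (w : M)) h
    simp only [mul_assoc, Units.inv_mul_cancel_left, Units.mul_inv_cancel_left] at h2
    simpa [mul_assoc] using h2
  · intro h
    have h2 := congrArg (fun x => (↑ws⁻¹ : M) * x * (↑w⁻¹ : M)) h
    simp only [mul_assoc, Units.inv_mul_cancel_left, Units.mul_inv_cancel_left,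
      Units.mul_inv_cancel_right, Units.inv_mul_cancel_right] at h2
    simpa [mul_assoc] using h2

private lemma unit_conj_iff₂ {M : Type*} [Monoid M] (w ws : Mˣ) (a b : M) :
    (↑w⁻¹ : M) * a * ↑w = ↑ws * b * ↑ws⁻¹ ↔ a * ((w : M) * ↑ws) = (w : M) * ↑ws * b := by
  constructor
  · intro h
    have h2 := congrArg (fun x => (w : M) * x * (ws : M)) h
    simp only [mul_assoc, Units.inv_mul_cancel_left, Units.mul_inv_cancel_left,
      Units.mul_inv_cancel_right, Units.inv_mul_cancel_right] at h2
    simpa [mul_assoc] using h2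
  · intro h
    have h2 := congrArg (fun x => (↑w⁻¹ : M) * x * (↑ws⁻¹ : M)) h
    simp only [mul_assoc, Units.inv_mul_cancel_left, Units.mul_inv_cancel_left,
      Units.mul_inv_cancel_right, Units.inv_mul_cancel_right] at h2
    simpa [mul_assoc] using h2

private def tdw {d : ℕ} {F : Type*} [Field F] (M : Matrix (Fin (d+1)) (Fin (d+1)) F) : ℕ → F
  | 0 => 1
  | n + 1 => tdw M n *
      (if h : n + 1 < d + 1 then
        M ⟨n, Nat.lt_of_succ_lt h⟩ ⟨n+1, h⟩ / M ⟨n+1, h⟩ ⟨n, Nat.lt_of_succ_lt h⟩ else 1)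

private lemma tdw_ne_zero {d : ℕ} {F : Type*} [Field F] {M : Matrix (Fin (d+1)) (Fin (d+1)) F}
    (hM : IsIrredTridiag M) : ∀ n, tdw M n ≠ 0 := by
  intro n
  induction n with
  | zero => simp [tdw]
  | succ n ih =>
    rw [tdw]
    by_cases h : n + 1 < d + 1
    · rw [dif_pos h]
      have h1 : M ⟨n, Nat.lt_of_succ_lt h⟩ ⟨n+1, h⟩ ≠ 0 := hM.2 _ _ (Or.inl rfl)
      have h2 : M ⟨n+1, h⟩ ⟨n, Nat.lt_of_succ_lt h⟩ ≠ 0 := hM.2 _ _ (Or.inr rfl)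
      exact mul_ne_zero ih (div_ne_zero h1 h2)
    · rw [dif_neg h]; simpa using ih

private lemma tdw_rel {d : ℕ} {F : Type*} [Field F] {M : Matrix (Fin (d+1)) (Fin (d+1)) F}
    (hM : IsIrredTridiag M) (i j : Fin (d+1)) :
    tdw M i * M i j = M j i * tdw M j := by
  rcases lt_trichotomy (i : ℕ) (j : ℕ) with h | h | h
  · rcases eq_or_lt_of_le (show (i : ℕ) + 1 ≤ (j : ℕ) from h) with h' | h'
    · -- j = i + 1
      have hj : (j : ℕ) = (i : ℕ) + 1 := h'.symm
      have hjd : (i : ℕ) + 1 < d + 1 := hj ▸ j.isLt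
      have hje : j = ⟨(i : ℕ) + 1, hjd⟩ := Fin.ext hj
      have hie : (⟨(i : ℕ), Nat.lt_of_succ_lt hjd⟩ : Fin (d+1)) = i := Fin.eta i _
      have hkj : tdw M (j : ℕ) = tdw M i * (M i j / M j i) := by
        rw [hj, tdw, dif_pos hjd, hie, ← hje]
      have hji : M j i ≠ 0 := hM.2 j i (Or.inr hj.symm)
      rw [hkj]
      field_simp
      try ring
    · -- i + 1 < j
      rw [hM.1 i j (Or.inl h'), hM.1 j i (Or.inr h'), mul_zero, zero_mul]
  · -- i = j
    have : i = j := Fin.ext h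
    subst this; ring
  · rcases eq_or_lt_of_le (show (j : ℕ) + 1 ≤ (i : ℕ) from h) with h' | h'
    · -- i = j + 1
      have hi : (i : ℕ) = (j : ℕ) + 1 := h'.symm
      have hid : (j : ℕ) + 1 < d + 1 := hi ▸ i.isLt
      have hie : i = ⟨(j : ℕ) + 1, hid⟩ := Fin.ext hi
      have hje : (⟨(j : ℕ), Nat.lt_of_succ_lt hid⟩ : Fin (d+1)) = j := Fin.eta j _
      have hki : tdw M (i : ℕ) = tdw M j * (M j i / M i j) := by
        rw [hi, tdw, dif_pos hid, hje, ← hie]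
      have hij : M i j ≠ 0 := hM.2 i j (Or.inr hi.symm)
      rw [hki]
      field_simp
      try ring
    · rw [hM.1 i j (Or.inr h'), hM.1 j i (Or.inl h'), mul_zero, zero_mul]

private lemma dag_fix_of_adjoin {F : Type*} [Field F] {n : Type*} [Fintype n] [DecidableEq n]
    (dag : Matrix n n F → Matrix n n F)
    (hadd : ∀ X Y, dag (X + Y) = dag X + dag Y)
    (hsmul : ∀ (a : F) X, dag (a • X) = a • dag X)
    (hmul : ∀ X Y, dag (X * Y) = dag Y * dag X)
    (hone : dag 1 = 1)
    (M : Matrix n n F) (hMfix : dag M = M)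
    {X : Matrix n n F} (hX : X ∈ Algebra.adjoin F {M}) : dag X = X := by
  rw [Algebra.adjoin_singleton_eq_range_aeval] at hX
  obtain ⟨p, hp⟩ := hX
  have key : ∀ q : Polynomial F, dag (Polynomial.aeval M q) = Polynomial.aeval M q := by
    intro q
    induction q using Polynomial.induction_on' with
    | add p q hp hq => rw [map_add, hadd, hp, hq]
    | monomial m a =>
      have hpow : ∀ k : ℕ, dag (M ^ k) = M ^ k := by
        intro k
        induction k with
        | zero => simpa using hone
        | succ k ih => rw [pow_succ, hmul, ih, hMfix, ← pow_succ', ← pow_succ]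
      rw [Polynomial.aeval_monomial, ← Algebra.smul_def, hsmul, hpow]
  rw [← hp]
  exact key p

/-- the four conditions defining a Boltzmann pair are equivalent. -/
theorem boltzmann_conditions_tfae {F V : Type*} [Field F] [AddCommGroup V] [Module F V]
    (d : ℕ) (A Astar W Wstar : Module.End F V)
    (hLP : IsLeonardPair d A Astar)
    (hW : W ∈ Algebra.adjoin F {A}) (hWs : Wstar ∈ Algebra.adjoin F {Astar})
    (hWu : IsUnit W) (hWsu : IsUnit Wstar) :
    List.TFAE [
      W * Astar * Ring.inverse W = Ring.inverse Wstar * A * Wstar,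
      Ring.inverse W * Astar * W = Wstar * A * Ring.inverse Wstar,
      Wstar * W * Astar = A * (Wstar * W),
      Astar * (W * Wstar) = W * Wstar * A ] := by
  obtain ⟨⟨b, hMtri, hMsdiag⟩, -⟩ := hLP
  -- unit bookkeeping
  have hw : (hWu.unit : Module.End F V) = W := hWu.unit_spec
  have hws : (hWsu.unit : Module.End F V) = Wstar := hWsu.unit_spec
  have hinvW : Ring.inverse W = ((hWu.unit⁻¹ : _) : Module.End F V) := by
    conv_lhs => rw [← hw]
    exact Ring.inverse_unit _
  have hinvWs : Ring.inverse Wstar = ((hWsu.unit⁻¹ : _) : Module.End F V) := by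
    conv_lhs => rw [← hws]
    exact Ring.inverse_unit _
  -- 1 ↔ 3
  tfae_have 1 ↔ 3 := by
    rw [hinvW, hinvWs]
    have h := unit_conj_iff₁ hWu.unit hWsu.unit Astar A
    rw [hw, hws] at h
    exact h
  -- 2 ↔ 4
  tfae_have 2 ↔ 4 := by
    rw [hinvW, hinvWs]
    have h := unit_conj_iff₂ hWu.unit hWsu.unit Astar A
    rw [hw, hws] at h
    exact h
  -- 3 ↔ 4 via the matrix antiautomorphism
  tfae_have 3 ↔ 4 := by
    set e := LinearMap.toMatrixAlgEquiv b with he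
    have heA : ∀ X : Module.End F V, e X = LinearMap.toMatrix b b X := fun _ => rfl
    set Mm : Matrix (Fin (d+1)) (Fin (d+1)) F := e A with hMm
    set Ms : Matrix (Fin (d+1)) (Fin (d+1)) F := e Astar with hMs
    have hMtri' : IsIrredTridiag Mm := hMtri
    have hMsdiag' : Ms.IsDiag := hMsdiag
    set k : Fin (d+1) → F := fun i => tdw Mm (i : ℕ) with hk
    have hk0 : ∀ i, k i ≠ 0 := fun i => tdw_ne_zero hMtri' _
    set K : Matrix (Fin (d+1)) (Fin (d+1)) F := Matrix.diagonal k with hK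
    set K' : Matrix (Fin (d+1)) (Fin (d+1)) F := Matrix.diagonal (fun i => (k i)⁻¹) with hK'
    have hKK' : K * K' = 1 := by
      rw [hK, hK', Matrix.diagonal_mul_diagonal]
      have h1 : (fun i => k i * (k i)⁻¹) = fun _ : Fin (d+1) => (1:F) :=
        funext fun i => mul_inv_cancel₀ (hk0 i)
      rw [h1, Matrix.diagonal_one]
    have hK'K : K' * K = 1 := by
      rw [hK', hK, Matrix.diagonal_mul_diagonal]
      have h1 : (fun i => (k i)⁻¹ * k i) = fun _ : Fin (d+1) => (1:F) :=
        funext fun i => inv_mul_cancel₀ (hk0 i)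
      rw [h1, Matrix.diagonal_one]
    set dag : Matrix (Fin (d+1)) (Fin (d+1)) F → Matrix (Fin (d+1)) (Fin (d+1)) F :=
      (fun N => K' * Nᵀ * K) with hdag
    have hadd : ∀ X Y, dag (X + Y) = dag X + dag Y := by
      intro X Y; simp [hdag, Matrix.transpose_add, Matrix.mul_add, Matrix.add_mul]
    have hsmul : ∀ (a : F) X, dag (a • X) = a • dag X := by
      intro a X; simp [hdag, Matrix.transpose_smul, Matrix.mul_smul, Matrix.smul_mul]
    have hmul : ∀ X Y, dag (X * Y) = dag Y * dag X := by
      intro X Y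
      simp only [hdag, Matrix.transpose_mul]
      calc K' * (Yᵀ * Xᵀ) * K = K' * Yᵀ * (K * K') * (Xᵀ * K) := by
            rw [hKK']; noncomm_ring
        _ = K' * Yᵀ * K * (K' * Xᵀ * K) := by noncomm_ring
    have hone : dag 1 = 1 := by
      simp only [hdag, Matrix.transpose_one, Matrix.mul_one]
      exact hK'K
    have hMfix : dag Mm = Mm := by
      have hrel : Mmᵀ * K = K * Mm := by
        ext i j
        rw [Matrix.mul_diagonal, Matrix.diagonal_mul, Matrix.transpose_apply]
        exact (tdw_rel hMtri' i j).symm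
      rw [hdag]
      simp only []
      rw [show K' * Mmᵀ * K = K' * (Mmᵀ * K) by rw [Matrix.mul_assoc], hrel,
        ← Matrix.mul_assoc, hK'K, Matrix.one_mul]
    have hMsfix : dag Ms = Ms := by
      have hMst : Msᵀ = Ms := by
        ext i j
        rw [Matrix.transpose_apply]
        by_cases hij : i = j
        · rw [hij]
        · rw [hMsdiag' (Ne.symm hij), hMsdiag' hij]
      have hcomm : Ms * K = K * Ms := by
        ext i j
        rw [Matrix.mul_diagonal, Matrix.diagonal_mul]
        by_cases hij : i = j
        · rw [hij]; ring
        · rw [hMsdiag' hij]; ring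
      rw [hdag]
      simp only []
      rw [hMst, show K' * Ms * K = K' * (Ms * K) by rw [Matrix.mul_assoc], hcomm,
        ← Matrix.mul_assoc, hK'K, Matrix.one_mul]
    -- images of W, Wstar
    have hWm : e W ∈ Algebra.adjoin F {Mm} := by
      have : e W ∈ Subalgebra.map e.toAlgHom (Algebra.adjoin F {A}) :=
        ⟨W, hW, rfl⟩
      rwa [AlgHom.map_adjoin, Set.image_singleton] at this
    have hWsm : e Wstar ∈ Algebra.adjoin F {Ms} := by
      have : e Wstar ∈ Subalgebra.map e.toAlgHom (Algebra.adjoin F {Astar}) :=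
        ⟨Wstar, hWs, rfl⟩
      rwa [AlgHom.map_adjoin, Set.image_singleton] at this
    have hWfix : dag (e W) = e W :=
      dag_fix_of_adjoin dag hadd hsmul hmul hone Mm hMfix hWm
    have hWsfix : dag (e Wstar) = e Wstar :=
      dag_fix_of_adjoin dag hadd hsmul hmul hone Ms hMsfix hWsm
    constructor
    · intro h
      have h' := congrArg e h
      simp only [_root_.map_mul] at h'
      -- h' : e Wstar * e W * e Astar = e A * (e Wstar * e W)
      have h'' := congrArg dag h'
      rw [hmul, hmul, hmul, hmul, hWfix, hWsfix, hMfix, hMsfix] at h''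
      rw [hMs, hMm] at h''
      apply e.injective
      simp only [_root_.map_mul]
      exact h''
    · intro h
      have h' := congrArg e h
      simp only [_root_.map_mul] at h'
      have h'' := congrArg dag h'
      rw [hmul, hmul, hmul, hmul, hWfix, hWsfix, hMfix, hMsfix] at h''
      rw [hMs, hMm] at h''
      apply e.injective
      simp only [_root_.map_mul]
      exact h''
  tfae_finish
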